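/- arXiv:1910.14129 — 7 statements merged into one kernel-verified Lean document; each statement's English description precedes it below -/
import Mathlib

section
/- For any positive integer t, any integers a_1,...,a_t, and any coefficients ε_1,...,ε_t each in {-2,-1,1,2}, the absolute value of (ε_1·3^{a_1} + ε_2·3^{a_2} + ... + ε_t·3^{a_t}) - 1/2 is at least 1/(2·3^t). -/
lemma parity_step {T : ℕ} (a ε : Fin T → ℤ)
    (k : ℕ) (s : Finset (Fin T)) (hk : ∀ i ∈ s, -(k:ℤ) ≤ a i) :
    |(∑ i ∈ s, (ε i : ℚ) * (3:ℚ) ^ (a i)) - 1/2| ≥ 1 / (2 * 3 ^ k) := by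
  set N : ℤ := ∑ i ∈ s, ε i * 3 ^ ((a i + k).toNat) with hN
  have hcast : ((N : ℚ)) = (∑ i ∈ s, (ε i : ℚ) * (3:ℚ) ^ (a i)) * 3 ^ k := by
    rw [hN, Finset.sum_mul]
    push_cast
    apply Finset.sum_congr rfl
    intro i hi
    have h1 : (0:ℤ) ≤ a i + k := by have := hk i hi; omega
    have h2 : ((a i + k).toNat : ℤ) = a i + k := Int.toNat_of_nonneg h1
    rw [show ((3:ℚ) ^ ((a i + k).toNat)) = (3:ℚ) ^ (((a i + k).toNat : ℤ)) by
      rw [zpow_natCast], h2, zpow_add₀ (by norm_num : (3:ℚ) ≠ 0)]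
    rw [zpow_natCast]
    ring
  have hodd : Odd (2 * N - 3 ^ k) := by
    have h1 : Even (2 * N) := even_two_mul N
    have h2 : Odd ((3:ℤ) ^ k) := Odd.pow (by decide)
    exact h1.sub_odd h2
  have habsZ : (1:ℤ) ≤ |2 * N - 3 ^ k| := by
    rcases hodd with ⟨m, hm⟩
    rcases abs_cases (2 * N - 3 ^ k) with ⟨h, _⟩ | ⟨h, _⟩ <;> omega
  have habs : (1:ℚ) ≤ |2 * (N:ℚ) - 3 ^ k| := by
    have : ((1:ℤ):ℚ) ≤ |((2 * N - 3 ^ k : ℤ) : ℚ)| := by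
      rw [← Int.cast_abs]; exact_mod_cast habsZ
    push_cast at this
    convert this using 2
  have h3 : (0:ℚ) < 3 ^ k := by positivity
  have heq : (∑ i ∈ s, (ε i : ℚ) * (3:ℚ) ^ (a i)) - 1/2
      = (2 * (N:ℚ) - 3 ^ k) / (2 * 3 ^ k) := by
    field_simp
    linarith [hcast]
  rw [heq, abs_div, abs_of_pos (by positivity : (0:ℚ) < 2 * 3 ^ k)]
  exact ge_iff_le.mpr (div_le_div_of_nonneg_right habs (by positivity) |>.trans_eq rfl)

lemma term_bound {T : ℕ} (a ε : Fin T → ℤ)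
    (hε : ∀ i, ε i = -2 ∨ ε i = -1 ∨ ε i = 1 ∨ ε i = 2)
    (i : Fin T) (m : ℕ) (hm : a i ≤ -(m:ℤ)) :
    |(ε i : ℚ) * (3:ℚ) ^ (a i)| ≤ 2 / 3 ^ m := by
  rw [abs_mul]
  have h1 : |(ε i : ℚ)| ≤ 2 := by rcases hε i with h | h | h | h <;> rw [h] <;> norm_num
  have h2 : |(3:ℚ) ^ (a i)| ≤ (3:ℚ)^(-(m:ℤ)) := by
    rw [abs_of_pos (by positivity)]
    exact zpow_le_zpow_right₀ (by norm_num) hm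
  have h3 : (3:ℚ)^(-(m:ℤ)) = 1 / 3 ^ m := by
    rw [zpow_neg, zpow_natCast]; exact inv_eq_one_div _
  rw [h3] at h2
  have h4 : (0:ℚ) ≤ |(3:ℚ) ^ (a i)| := abs_nonneg _
  have h5 : (0:ℚ) < 3 ^ m := by positivity
  calc |(ε i : ℚ)| * |(3:ℚ) ^ (a i)| ≤ 2 * (1 / 3 ^ m) := by
        apply mul_le_mul h1 h2 h4 (by norm_num)
    _ = 2 / 3 ^ m := by ring

lemma key_lemma {T : ℕ} (a ε : Fin T → ℤ)
    (hε : ∀ i, ε i = -2 ∨ ε i = -1 ∨ ε i = 1 ∨ ε i = 2) :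
    ∀ (n : ℕ) (s : Finset (Fin T)), s.card = n + 1 →
      |(∑ i ∈ s, (ε i : ℚ) * (3:ℚ) ^ (a i)) - 1/2| ≥ 1 / (2 * 3 ^ (n+1)) := by
  intro n
  induction n with
  | zero =>
    intro s hs
    by_cases hall : ∀ i ∈ s, -((1:ℕ):ℤ) ≤ a i
    · exact parity_step a ε 1 s hall
    · push_neg at hall
      obtain ⟨i0, hi0, hlt⟩ := hall
      obtain ⟨j, hj⟩ := Finset.card_eq_one.mp hs
      have hij : i0 = j := by rw [hj] at hi0; simpa using hi0
      subst hij
      rw [hj, Finset.sum_singleton]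
      have hb : |(ε i0 : ℚ) * (3:ℚ) ^ (a i0)| ≤ 2 / 3 ^ 2 :=
        term_bound a ε hε i0 2 (by push_cast at hlt ⊢; omega)
      have := abs_sub_abs_le_abs_sub ((1:ℚ)/2) ((ε i0 : ℚ) * (3:ℚ) ^ (a i0))
      rw [abs_sub_comm] at this
      have h12 : |(1:ℚ)/2| = 1/2 := by norm_num
      norm_num at hb this ⊢
      linarith
  | succ n ih =>
    intro s hs
    by_cases hall : ∀ i ∈ s, -((n+2:ℕ):ℤ) ≤ a i
    · exact parity_step a ε (n+2) s hall
    · push_neg at hall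
      obtain ⟨i0, hi0, hlt⟩ := hall
      have hs' : (s.erase i0).card = n + 1 := by
        rw [Finset.card_erase_of_mem hi0, hs]
        omega
      have IH := ih (s.erase i0) hs'
      have hsum : (∑ i ∈ s, (ε i : ℚ) * (3:ℚ) ^ (a i))
          = (∑ i ∈ s.erase i0, (ε i : ℚ) * (3:ℚ) ^ (a i)) + (ε i0 : ℚ) * (3:ℚ) ^ (a i0) := by
        rw [Finset.sum_erase_add s _ hi0]
      have hb : |(ε i0 : ℚ) * (3:ℚ) ^ (a i0)| ≤ 2 / 3 ^ (n+3) :=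
        term_bound a ε hε i0 (n+3) (by push_cast at hlt ⊢; omega)
      set S' := ∑ i ∈ s.erase i0, (ε i : ℚ) * (3:ℚ) ^ (a i) with hS'
      set u := (ε i0 : ℚ) * (3:ℚ) ^ (a i0) with hu
      have htri : |S' - 1/2| - |S' + u - 1/2| ≤ |u| := by
        have := abs_sub_abs_le_abs_sub (S' - 1/2) (S' + u - 1/2)
        have he : (S' - 1/2) - (S' + u - 1/2) = -u := by ring
        rw [he, abs_neg] at this
        linarith
      rw [hsum]
      have hpow : (0:ℚ) < (3:ℚ) ^ n := by positivity
      have e1 : (3:ℚ) ^ (n+1) = 3 ^ n * 3 := by ring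
      have e2 : (3:ℚ) ^ (n+1+1) = 3 ^ n * 9 := by ring
      have e3 : (3:ℚ) ^ (n+3) = 3 ^ n * 27 := by ring
      rw [ge_iff_le, e2]
      rw [ge_iff_le, e1] at IH
      rw [e3] at hb
      have hfinal : (1:ℚ) / (2 * ((3:ℚ) ^ n * 9)) ≤ 1 / (2 * ((3:ℚ) ^ n * 3)) - 2 / ((3:ℚ) ^ n * 27) := by
        have hy : (0:ℚ) ≤ ((3:ℚ) ^ n)⁻¹ := by positivity
        have eA : 1 / (2 * ((3:ℚ) ^ n * 9)) = (1/18) * ((3:ℚ) ^ n)⁻¹ := by ring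
        have eB : 1 / (2 * ((3:ℚ) ^ n * 3)) = (1/6) * ((3:ℚ) ^ n)⁻¹ := by ring
        have eC : 2 / ((3:ℚ) ^ n * 27) = (2/27) * ((3:ℚ) ^ n)⁻¹ := by ring
        rw [eA, eB, eC]
        linarith
      linarith

theorem stmt_0 (t : ℕ) (ht : 0 < t) (a : Fin t → ℤ) (ε : Fin t → ℤ)
    (hε : ∀ i, ε i = -2 ∨ ε i = -1 ∨ ε i = 1 ∨ ε i = 2) :
    |(∑ i, (ε i : ℚ) * (3 : ℚ) ^ (a i)) - 1/2| ≥ 1 / (2 * 3 ^ t) := by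
  obtain ⟨n, rfl⟩ := Nat.exists_eq_succ_of_ne_zero ht.ne'
  have hcard : (Finset.univ : Finset (Fin (n+1))).card = n + 1 := by
    simp
  exact key_lemma a ε hε n Finset.univ hcard
end

section
/- There exists a finite connected graph that is almost bridgeless but does not admit a bipolar numbering. -/
/-- A graph is bridgeless if it has no bridges. -/
def Bridgeless {V : Type*} (G : SimpleGraph V) : Prop := ∀ e, ¬ G.IsBridge e

/-- A graph is almost bridgeless if one can add a single edge (possibly an already existing
one, in which case the graph itself must be bridgeless) so that the result is bridgeless. -/
def AlmostBridgeless {V : Type*} (G : SimpleGraph V) : Prop :=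
  ∃ u v : V, Bridgeless (G ⊔ SimpleGraph.fromEdgeSet {s(u, v)})

/-- A bipolar numbering: a bijective labeling of the vertices with `0, …, k-1` such that
every vertex with a positive label has a neighbor with a smaller label, and every vertex
with label other than the largest has a neighbor with a larger label. -/
def HasBipolarNumbering {V : Type*} [Fintype V] (G : SimpleGraph V) : Prop :=
  ∃ ℓ : V ≃ Fin (Fintype.card V),
    (∀ v, (ℓ v : ℕ) ≠ 0 → ∃ w, G.Adj v w ∧ ℓ w < ℓ v) ∧
    (∀ v, (ℓ v : ℕ) ≠ Fintype.card V - 1 → ∃ w, G.Adj v w ∧ ℓ v < ℓ w)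

def eL : List (Fin 9 × Fin 9) :=
  [(0,1),(1,2),(0,2),(0,3),(0,4),(3,4),(1,5),(1,6),(5,6),(2,7),(2,8),(7,8)]

def myA (a b : Fin 9) : Bool := (a,b) ∈ eL ∨ (b,a) ∈ eL

def myG : SimpleGraph (Fin 9) where
  Adj a b := myA a b
  symm := ⟨by intro a b; revert a b; decide⟩
  loopless := ⟨by intro a; revert a; decide⟩

instance : DecidableRel myG.Adj := fun a b => inferInstanceAs (Decidable (myA a b = true))

lemma triNotBridge (x y z : Fin 9) (h1 : myG.Adj x y) (h2 : myG.Adj y z)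
    (h3 : myG.Adj z x) : ¬ myG.IsBridge s(x,y) := by
  rw [SimpleGraph.isBridge_iff_forall_cycle_notMem h1]
  intro hc
  have hxy := h1.ne
  have hyz := h2.ne
  have hzx := h3.ne
  refine hc (.cons h1 (.cons h2 (.cons h3 .nil))) ⟨⟨?_, ?_⟩, ?_⟩ ?_
  · simp [SimpleGraph.Walk.isPath_def, List.Nodup, Sym2.eq_iff]
    tauto
  · simp
  · simp [List.Nodup]
    constructor
    · constructor <;> omega
    · exact fun h => hzx h
  · simp

lemma triExists : ∀ a b : Fin 9, myG.Adj a b → ∃ z : Fin 9, myG.Adj b z ∧ myG.Adj z a := by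
  decide

lemma myConnected : myG.Connected := by
  rw [SimpleGraph.connected_iff_exists_forall_reachable]
  refine ⟨0, fun w => ?_⟩
  fin_cases w
  · rfl
  · exact ⟨.cons (by decide) .nil⟩
  · exact ⟨.cons (by decide) .nil⟩
  · exact ⟨.cons (by decide) .nil⟩
  · exact ⟨.cons (by decide) .nil⟩
  · exact ⟨SimpleGraph.Walk.cons (v := 1) (by decide) (.cons (by decide) .nil)⟩
  · exact ⟨SimpleGraph.Walk.cons (v := 1) (by decide) (.cons (by decide) .nil)⟩
  · exact ⟨SimpleGraph.Walk.cons (v := 2) (by decide) (.cons (by decide) .nil)⟩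
  · exact ⟨SimpleGraph.Walk.cons (v := 2) (by decide) (.cons (by decide) .nil)⟩

lemma myBridgeless : Bridgeless myG := by
  intro e
  induction e using Sym2.ind with
  | _ a b =>
    intro hb
    have hadj : myG.Adj a b := by
      by_contra hn
      apply SimpleGraph.isBridge_iff.1 hb
      have hdel : myG.deleteEdges {s(a, b)} = myG := by
        rw [SimpleGraph.deleteEdges_eq_self]
        simpa using hn
      rw [hdel]
      exact myConnected.preconnected a b
    obtain ⟨z, h2, h3⟩ := triExists a b hadj
    exact triNotBridge a b z hadj h2 h3 hb

lemma myAlmost : AlmostBridgeless myG := by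
  refine ⟨0, 0, ?_⟩
  have hbot : SimpleGraph.fromEdgeSet {s((0:Fin 9), 0)} = ⊥ := by
    ext a b
    simp only [SimpleGraph.fromEdgeSet_adj, Set.mem_singleton_iff, SimpleGraph.bot_adj,
      iff_false, not_and, Sym2.eq_iff]
    rintro (⟨rfl, rfl⟩ | ⟨rfl, rfl⟩) h <;> exact h rfl
  rw [hbot, sup_bot_eq]
  exact myBridgeless

lemma pairLemma {n : ℕ} (ℓ : Fin 9 ≃ Fin n)
    (h1 : ∀ v, (ℓ v : ℕ) ≠ 0 → ∃ w, myG.Adj v w ∧ ℓ w < ℓ v)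
    (h2 : ∀ v, (ℓ v : ℕ) ≠ n - 1 → ∃ w, myG.Adj v w ∧ ℓ v < ℓ w)
    (a b c : Fin 9)
    (hna : ∀ w, myG.Adj a w → w = c ∨ w = b)
    (hnb : ∀ w, myG.Adj b w → w = c ∨ w = a) :
    (ℓ a : ℕ) = 0 ∨ (ℓ b : ℕ) = 0 ∨ (ℓ a : ℕ) = n - 1 ∨ (ℓ b : ℕ) = n - 1 := by
  by_contra hcon
  push_neg at hcon
  obtain ⟨ha0, hb0, ha8, hb8⟩ := hcon
  obtain ⟨w1, hw1a, hw1⟩ := h1 a ha0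
  obtain ⟨w2, hw2a, hw2⟩ := h2 a ha8
  obtain ⟨w3, hw3a, hw3⟩ := h1 b hb0
  obtain ⟨w4, hw4a, hw4⟩ := h2 b hb8
  simp only [Fin.lt_def] at hw1 hw2 hw3 hw4
  rcases hna w1 hw1a with rfl | rfl <;> rcases hna w2 hw2a with rfl | rfl <;>
    rcases hnb w3 hw3a with rfl | rfl <;> rcases hnb w4 hw4a with rfl | rfl <;> omega

lemma myNoBipolar : ¬ HasBipolarNumbering myG := by
  rintro ⟨ℓ, h1, h2⟩
  have inj : ∀ x y : Fin 9, (ℓ x : ℕ) = (ℓ y : ℕ) → x = y :=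
    fun x y h => ℓ.injective (Fin.val_injective h)
  have P1 := pairLemma ℓ h1 h2 3 4 0 (by decide) (by decide)
  have P2 := pairLemma ℓ h1 h2 5 6 1 (by decide) (by decide)
  have P3 := pairLemma ℓ h1 h2 7 8 2 (by decide) (by decide)
  rcases P1 with h1' | h1' | h1' | h1' <;> rcases P2 with h2' | h2' | h2' | h2' <;>
    rcases P3 with h3' | h3' | h3' | h3' <;>
    first
      | exact absurd (inj _ _ (h1'.trans h2'.symm)) (by decide)
      | exact absurd (inj _ _ (h1'.trans h3'.symm)) (by decide)
      | exact absurd (inj _ _ (h2'.trans h3'.symm)) (by decide)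

theorem stmt_4 :
    ∃ (n : ℕ) (G : SimpleGraph (Fin n)),
      G.Connected ∧ AlmostBridgeless G ∧ ¬ HasBipolarNumbering G := by
  exact ⟨9, myG, myConnected, myAlmost, myNoBipolar⟩
end

section
/- Every almost bridgeless finite connected graph admits a contiguous oriented labeling. -/
/-- A set of edges forms a connected subgraph: any two vertices covered by the edge set
are joined by a walk using only these edges. -/
def EdgeSetConnected {V : Type*} (S : Set (Sym2 V)) : Prop :=
  ∀ u v : V, (∃ e ∈ S, u ∈ e) → (∃ e ∈ S, v ∈ e) →
    (SimpleGraph.fromEdgeSet S).Reachable u v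

/-- A contiguous oriented labeling of a graph with `m` edges: a labeling of the edges by
`0, …, m-1` (each edge used exactly once), each edge `i` oriented from its tail `iᵀ` to its
head `iᴴ` (encoded as a dart), such that for each `i > 0` the edges labeled `0, …, i-1`
form a connected subgraph containing the tail of edge `i`, and for each `i < m-1` the edges
labeled `i+1, …, m-1` form a connected subgraph containing the head of edge `i`. -/
def HasContiguousOrientedLabeling {V : Type*} (G : SimpleGraph V) (m : ℕ) : Prop :=
  ∃ d : Fin m → G.Dart,
    Function.Bijective (fun i => (⟨(d i).edge, (d i).edge_mem⟩ : G.edgeSet)) ∧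
    (∀ i : Fin m, 0 < (i : ℕ) →
      EdgeSetConnected {e | ∃ j, j < i ∧ e = (d j).edge} ∧
      ∃ j, j < i ∧ (d i).fst ∈ (d j).edge) ∧
    (∀ i : Fin m, (i : ℕ) < m - 1 →
      EdgeSetConnected {e | ∃ j, i < j ∧ e = (d j).edge} ∧
      ∃ j, i < j ∧ (d i).snd ∈ (d j).edge)

open SimpleGraph

namespace ContigAux

variable {V : Type*}

/-- vertices covered by an edge set -/
def supp (S : Set (Sym2 V)) : Set V := {x | ∃ e ∈ S, x ∈ e}

/-- all pairs within B -/
def KK (B : Set V) : Set (Sym2 V) := {e | ∃ x ∈ B, ∃ y ∈ B, e = s(x,y)}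

def Inv (S : Set (Sym2 V)) (A : Set V) (v : V) : Prop :=
  (∀ x y, x ∈ supp S → y ∈ supp S → (SimpleGraph.fromEdgeSet S).Reachable x y) ∧
  (∀ p q, s(p,q) ∈ S →
    (SimpleGraph.fromEdgeSet ((S \ {s(p,q)}) ∪ KK (insert v A))).Reachable p q) ∧
  (∃ a ∈ A, a ∈ supp S)

lemma mem_KK {B : Set V} {x y : V} (hx : x ∈ B) (hy : y ∈ B) : s(x,y) ∈ KK B :=
  ⟨x, hx, y, hy, rfl⟩

lemma KK_mono {B B' : Set V} (h : B ⊆ B') : KK B ⊆ KK B' := by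
  rintro e ⟨x, hx, y, hy, rfl⟩
  exact ⟨x, h hx, y, h hy, rfl⟩

lemma supp_mono {S T : Set (Sym2 V)} (h : S ⊆ T) : supp S ⊆ supp T := by
  rintro x ⟨e, he, hx⟩; exact ⟨e, h he, hx⟩

/-- SL1: deleting a non-bridge edge preserves reachability -/
lemma reach_delete {S : Set (Sym2 V)} {a b : V}
    (hre : (SimpleGraph.fromEdgeSet (S \ {s(a,b)})).Reachable a b) :
    ∀ x y, (SimpleGraph.fromEdgeSet S).Reachable x y →
      (SimpleGraph.fromEdgeSet (S \ {s(a,b)})).Reachable x y := by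
  intro x y ⟨w⟩
  induction w with
  | nil => rfl
  | cons h p ih =>
    rename_i u c d
    rw [fromEdgeSet_adj] at h
    refine Reachable.trans ?_ ih
    by_cases he : s(u, c) = s(a,b)
    · rw [Sym2.eq_iff] at he
      rcases he with ⟨rfl, rfl⟩ | ⟨rfl, rfl⟩
      · exact hre
      · exact hre.symm
    · exact Adj.reachable (by rw [fromEdgeSet_adj]; exact ⟨⟨h.1, he⟩, h.2⟩)

/-- endpoint of a nontrivial reachability is covered -/
lemma mem_supp_of_reachable {S : Set (Sym2 V)} {x y : V}
    (hr : (SimpleGraph.fromEdgeSet S).Reachable x y) (hxy : x ≠ y) : y ∈ supp S := by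
  obtain ⟨w⟩ := hr
  induction w with
  | nil => exact absurd rfl hxy
  | cons h p ih =>
    rename_i u c d
    by_cases hcy : c = d
    · subst hcy
      rw [fromEdgeSet_adj] at h
      exact ⟨s(u,c), h.1, by simp [Sym2.mem_iff]⟩
    · exact ih hcy

/-- crossing lemma -/
lemma cross {T : Set (Sym2 V)} {Z : Set V} {x y : V}
    (w : (SimpleGraph.fromEdgeSet T).Walk x y) (hx : x ∉ Z) (hy : y ∈ Z) :
    ∃ p q, p ∉ Z ∧ q ∈ Z ∧ s(p,q) ∈ T ∧ q ∈ w.support := by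
  induction w with
  | nil => exact absurd hy hx
  | cons h p ih =>
    rename_i u c d
    by_cases hc : c ∈ Z
    · rw [fromEdgeSet_adj] at h
      exact ⟨u, c, hx, hc, h.1, by simp [Walk.support_cons, Walk.start_mem_support]⟩
    · obtain ⟨p', q', h1, h2, h3, h4⟩ := ih hc hy
      exact ⟨p', q', h1, h2, h3, by simp only [Walk.support_cons, List.mem_cons]; right; exact h4⟩

variable {V : Type*}

def Zset (S : Set (Sym2 V)) (g : Sym2 V) (t : V) : Set V :=
  {z | (SimpleGraph.fromEdgeSet (S \ {g})).Reachable t z}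

def BP (S : Set (Sym2 V)) (g : Sym2 V) (s t : V) : Prop :=
  g = s(s,t) ∧ g ∈ S ∧ ¬ (SimpleGraph.fromEdgeSet (S \ {g})).Reachable s t

def insideE (S : Set (Sym2 V)) (Z : Set V) : Set (Sym2 V) :=
  {f | f ∈ S ∧ ∀ x ∈ f, x ∈ Z}

lemma leaf [Finite V] {S : Set (Sym2 V)} :
    ∀ (n : ℕ) (W : Set V) (g : Sym2 V) (sv t : V), BP S g sv t →
    (insideE S (Zset S g t)).ncard ≤ n → Zset S g t ⊆ W →
    ∃ g' s' t', BP S g' s' t' ∧ Zset S g' t' ⊆ W ∧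
      ∀ f ∈ insideE S (Zset S g' t'), ∀ p q, f = s(p,q) →
        (SimpleGraph.fromEdgeSet (S \ {f})).Reachable p q := by
  intro n
  induction n with
  | zero =>
    intro W g sv t hBP hn hW
    by_cases hprop : ∀ f ∈ insideE S (Zset S g t), ∀ p q, f = s(p,q) →
        (SimpleGraph.fromEdgeSet (S \ {f})).Reachable p q
    · exact ⟨g, sv, t, hBP, hW, hprop⟩
    · push_neg at hprop
      obtain ⟨f, hf, p₀, q₀, hfe, hnr⟩ := hprop
      exfalso
      have : (insideE S (Zset S g t)).Nonempty := ⟨f, hf⟩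
      have := Set.ncard_pos (Set.toFinite _) |>.mpr this
      omega
  | succ n ih =>
    intro W g sv t hBP hn hW
    by_cases hprop : ∀ f ∈ insideE S (Zset S g t), ∀ p q, f = s(p,q) →
        (SimpleGraph.fromEdgeSet (S \ {f})).Reachable p q
    · exact ⟨g, sv, t, hBP, hW, hprop⟩
    push_neg at hprop
    obtain ⟨f, hf, p₀, q₀, hfe, hnr⟩ := hprop
    -- choose the far endpoint c and near o
    obtain ⟨o, c, hfoc, hnoc, hntc⟩ :
        ∃ o c, f = s(o,c) ∧ ¬ (SimpleGraph.fromEdgeSet (S \ {f})).Reachable o c ∧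
          ¬ (SimpleGraph.fromEdgeSet (S \ {f})).Reachable t c := by
      by_cases hr : (SimpleGraph.fromEdgeSet (S \ {f})).Reachable t p₀
      · exact ⟨p₀, q₀, hfe, hnr, fun h => hnr (hr.symm.trans h)⟩
      · exact ⟨q₀, p₀, by rw [hfe, Sym2.eq_swap], fun h => hnr h.symm, hr⟩
    have hcZ : c ∈ Zset S g t := hf.2 c (by rw [hfoc]; exact Sym2.mem_mk_right o c)
    have hoZ : o ∈ Zset S g t := hf.2 o (by rw [hfoc]; exact Sym2.mem_mk_left o c)
    have subZ : Zset S f c ⊆ Zset S g t := by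
      intro z hz
      by_contra hzZ
      obtain ⟨w⟩ := (hz : (SimpleGraph.fromEdgeSet (S \ {f})).Reachable c z).symm
      obtain ⟨p, q, hp, hq, hpq, hqsup⟩ := cross w hzZ hcZ
      by_cases hg : s(p,q) = g
      · have hq_t : q = t := by
          rcases Sym2.eq_iff.mp (hg.trans hBP.1) with ⟨hps, hqt⟩ | ⟨hpt, hqs⟩
          · exact hqt
          · exact absurd (show p ∈ Zset S g t by simp only [Zset, Set.mem_setOf_eq, hpt]; exact Reachable.refl t) hp
        subst hq_t
        classical
        exact hntc ⟨w.dropUntil q hqsup⟩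
      · have hne : p ≠ q := fun h => hp (h ▸ hq)
        have : (SimpleGraph.fromEdgeSet (S \ {g})).Adj q p := by
          rw [fromEdgeSet_adj, Sym2.eq_swap]
          exact ⟨⟨hpq.1, hg⟩, hne.symm⟩
        exact hp (hq.trans this.reachable)
    have hBP' : BP S f o c := ⟨hfoc, hf.1, hnoc⟩
    have hssub : insideE S (Zset S f c) ⊂ insideE S (Zset S g t) := by
      rw [Set.ssubset_iff_of_subset]
      · refine ⟨f, hf, fun hmem => ?_⟩
        exact hnoc (hmem.2 o (by rw [hfoc]; exact Sym2.mem_mk_left o c)).symm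
      · rintro e ⟨he, hsub⟩
        exact ⟨he, fun x hx => subZ (hsub x hx)⟩
    have hlt := Set.ncard_lt_ncard hssub (Set.toFinite _)
    exact ih W f o c hBP' (by omega) (subZ.trans hW)


lemma ne_of_memS {S : Set (Sym2 V)} (hdiag : ∀ e ∈ S, ¬ e.IsDiag) {a b : V}
    (h : s(a,b) ∈ S) : a ≠ b :=
  fun he => hdiag _ h (by rw [he]; exact Sym2.mk_isDiag_iff.mpr rfl)

lemma mem_KK_right {B : Set V} {p q : V} (h : s(p,q) ∈ KK B) : q ∈ B := by
  obtain ⟨x, hx, y, hy, heq⟩ := h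
  rcases Sym2.eq_iff.mp heq with ⟨_, rfl⟩ | ⟨_, rfl⟩
  · exact hy
  · exact hx

lemma inv2_mono {S : Set (Sym2 V)} {A : Set V} {v a b : V}
    (hcert : ∀ p q, s(p,q) ∈ S →
      (SimpleGraph.fromEdgeSet ((S \ {s(p,q)}) ∪ KK (insert v A))).Reachable p q) :
    ∀ p q, s(p,q) ∈ S \ {s(a,b)} →
      (SimpleGraph.fromEdgeSet (((S \ {s(a,b)}) \ {s(p,q)}) ∪
        KK (insert v (insert a (insert b A))))).Reachable p q := by
  intro p q hpq
  refine (hcert p q hpq.1).mono (fromEdgeSet_mono ?_)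
  rintro x (⟨hxS, hxne⟩ | hxK)
  · by_cases hxe : x = s(a,b)
    · subst hxe
      exact Or.inr (mem_KK (by simp) (by simp))
    · exact Or.inl ⟨⟨hxS, hxe⟩, hxne⟩
  · refine Or.inr (KK_mono ?_ hxK)
    intro z hz
    rcases hz with rfl | hz
    · simp
    · simp [hz]

lemma finish {S : Set (Sym2 V)} {A : Set V} (hdiag : ∀ e ∈ S, ¬ e.IsDiag)
    (hc1 : ∀ a b, a ∈ A → s(a,b) ∈ S →
      ¬ (SimpleGraph.fromEdgeSet (S \ {s(a,b)})).Reachable a b)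
    (hc2 : ∀ a b, a ∈ A → s(a,b) ∈ S → ∃ f ∈ S, a ∈ f ∧ f ≠ s(a,b))
    {s' t' z : V} (hg : s(s',t') ∈ S)
    (hleaf : ∀ f ∈ insideE S (Zset S s(s',t') t'), ∀ p q, f = s(p,q) →
      (SimpleGraph.fromEdgeSet (S \ {f})).Reachable p q)
    (hzZ : z ∈ Zset S s(s',t') t') (hzA : z ∈ A) : False := by
  by_cases hze : ∃ f ∈ S, z ∈ f ∧ f ≠ s(s',t')
  · obtain ⟨f, hfS, hzf, hfg⟩ := hze
    have hfeq : f = s(z, Sym2.Mem.other hzf) := (Sym2.other_spec hzf).symm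
    set w := Sym2.Mem.other hzf with hw
    have hzw : z ≠ w := ne_of_memS hdiag (hfeq ▸ hfS)
    have hwZ : w ∈ Zset S s(s',t') t' := by
      have hadj : (SimpleGraph.fromEdgeSet (S \ {s(s',t')})).Adj z w := by
        rw [fromEdgeSet_adj]
        exact ⟨⟨hfeq ▸ hfS, hfeq ▸ hfg⟩, hzw⟩
      exact (hzZ : (SimpleGraph.fromEdgeSet _).Reachable t' z).trans hadj.reachable
    have hfin : f ∈ insideE S (Zset S s(s',t') t') := by
      refine ⟨hfS, fun x hx => ?_⟩
      rw [hfeq, Sym2.mem_iff] at hx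
      rcases hx with rfl | rfl
      · exact hzZ
      · exact hwZ
    have := hleaf f hfin z w hfeq
    exact hc1 z w hzA (hfeq ▸ hfS) (hfeq ▸ this)
  · push_neg at hze
    have hzt : z = t' := by
      by_contra hne
      obtain ⟨f, hfS, hzf⟩ :=
        mem_supp_of_reachable (hzZ : (SimpleGraph.fromEdgeSet _).Reachable t' z)
          (fun h => hne h.symm)
      exact hfS.2 (hze f hfS.1 hzf)
    subst hzt
    have hmem : s(z, s') ∈ S := by rwa [Sym2.eq_swap]
    obtain ⟨f, hfS, hzf, hfne⟩ := hc2 z s' hzA hmem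
    exact hfne ((hze f hfS hzf).trans (Sym2.eq_swap))

lemma exists_edge_at_end {G : SimpleGraph V} : ∀ {x a : V} (w : G.Walk x a), x ≠ a →
    ∃ f ∈ w.edges, a ∈ f := by
  intro x a w hxa
  induction w with
  | nil => exact absurd rfl hxa
  | cons h p ih =>
    rename_i u c d
    by_cases hc : c = d
    · subst hc; exact ⟨s(u,c), by simp, Sym2.mem_mk_right _ _⟩
    · obtain ⟨f, hf, haf⟩ := ih hc
      exact ⟨f, by simp [hf], haf⟩

lemma exists_edge_at_start {G : SimpleGraph V} {a y : V} (w : G.Walk a y) (hay : a ≠ y) :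
    ∃ f ∈ w.edges, a ∈ f := by
  cases w with
  | nil => exact absurd rfl hay
  | cons h p =>
    rename_i c
    exact ⟨s(a,c), by rw [SimpleGraph.Walk.edges_cons]; exact List.mem_cons_self,
      Sym2.mem_mk_left _ _⟩

lemma step [Finite V] {S : Set (Sym2 V)} {A : Set V} {v : V}
    (hdiag : ∀ e ∈ S, ¬ e.IsDiag) (hInv : Inv S A v) :
    ∃ a b, a ∈ A ∧ s(a,b) ∈ S ∧
      (S \ {s(a,b)} = ∅ ∨
        ((∃ f ∈ S \ {s(a,b)}, b ∈ f) ∧ Inv (S \ {s(a,b)}) (insert a (insert b A)) v)) := by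
  classical
  obtain ⟨hconn, hcert, a₀, ha₀A, ha₀⟩ := hInv
  by_cases hc1 : ∃ a b, a ∈ A ∧ s(a,b) ∈ S ∧
      (SimpleGraph.fromEdgeSet (S \ {s(a,b)})).Reachable a b
  · -- Case 1 : non-bridge at an anchor
    obtain ⟨a, b, haA, habS, hre⟩ := hc1
    refine ⟨a, b, haA, habS, ?_⟩
    by_cases hS' : S \ {s(a,b)} = ∅
    · exact Or.inl hS'
    refine Or.inr ⟨?_, ?_, inv2_mono hcert, ?_⟩
    · exact mem_supp_of_reachable hre (ne_of_memS hdiag habS)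
    · intro x y hx hy
      exact reach_delete hre x y
        (hconn x y (supp_mono Set.diff_subset hx) (supp_mono Set.diff_subset hy))
    · exact ⟨b, by simp, mem_supp_of_reachable hre (ne_of_memS hdiag habS)⟩
  by_cases hc2 : ∃ a b, a ∈ A ∧ s(a,b) ∈ S ∧ ∀ f ∈ S, a ∈ f → f = s(a,b)
  · -- Case 2 : pendant anchor
    obtain ⟨a, b, haA, habS, huniq⟩ := hc2
    refine ⟨a, b, haA, habS, ?_⟩
    by_cases hS' : S \ {s(a,b)} = ∅
    · exact Or.inl hS'
    have hab : a ≠ b := ne_of_memS hdiag habS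
    have hanot : a ∉ supp (S \ {s(a,b)}) := by
      rintro ⟨f, hf, haf⟩
      exact hf.2 (huniq f hf.1 haf)
    have key : ∀ x y, x ∈ supp (S \ {s(a,b)}) → y ∈ supp (S \ {s(a,b)}) →
        (SimpleGraph.fromEdgeSet (S \ {s(a,b)})).Reachable x y := by
      intro x y hx hy
      have hxa : x ≠ a := fun h => hanot (h ▸ hx)
      have hya : y ≠ a := fun h => hanot (h ▸ hy)
      obtain ⟨w⟩ := hconn x y (supp_mono Set.diff_subset hx) (supp_mono Set.diff_subset hy)
      obtain ⟨pw, hpw⟩ := w.toPath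
      by_cases hep : s(a,b) ∈ pw.edges
      · exfalso
        have hsupp : a ∈ pw.support := Walk.fst_mem_support_of_mem_edges _ hep
        have hnd := hpw.edges_nodup
        rw [← Walk.take_spec pw hsupp, Walk.edges_append] at hnd
        obtain ⟨f1, hf1, haf1⟩ := exists_edge_at_end (pw.takeUntil a hsupp) hxa
        obtain ⟨f2, hf2, haf2⟩ := exists_edge_at_start (pw.dropUntil a hsupp) (fun h => hya h.symm)
        have hf1S : f1 ∈ S :=
          ((SimpleGraph.edgeSet_fromEdgeSet S) ▸ (Walk.edges_subset_edgeSet _ hf1)).1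
        have hf2S : f2 ∈ S :=
          ((SimpleGraph.edgeSet_fromEdgeSet S) ▸ (Walk.edges_subset_edgeSet _ hf2)).1
        have h1 : f1 = s(a,b) := huniq f1 hf1S haf1
        have h2 : f2 = s(a,b) := huniq f2 hf2S haf2
        exact (List.disjoint_of_nodup_append hnd) (h1 ▸ hf1) (h2 ▸ hf2)
      · refine ⟨pw.transfer (SimpleGraph.fromEdgeSet (S \ {s(a,b)})) ?_⟩
        intro f hf
        have hfS := (SimpleGraph.edgeSet_fromEdgeSet S) ▸ (Walk.edges_subset_edgeSet pw hf)
        rw [SimpleGraph.edgeSet_fromEdgeSet]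
        exact ⟨⟨hfS.1, fun h => hep (h ▸ hf)⟩, hfS.2⟩
    have hbsupp : ∃ f ∈ S \ {s(a,b)}, b ∈ f := by
      obtain ⟨f₀, hf₀⟩ := Set.nonempty_iff_ne_empty.mpr hS'
      obtain ⟨x, hx⟩ : ∃ x, x ∈ f₀ := by
        induction f₀ using Sym2.ind with
        | _ p q => exact ⟨p, Sym2.mem_mk_left _ _⟩
      have hxa : x ≠ a := by
        rintro rfl
        exact hf₀.2 (huniq f₀ hf₀.1 hx)
      obtain ⟨w⟩ := hconn a x ⟨s(a,b), habS, Sym2.mem_mk_left _ _⟩ ⟨f₀, hf₀.1, hx⟩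
      obtain ⟨pw, hpw⟩ := w.toPath
      cases pw with
      | nil => exact absurd rfl hxa
      | cons h q =>
        rename_i c
        have hacS : s(a,c) ∈ S := ((SimpleGraph.fromEdgeSet_adj S).mp h).1
        have heq : s(a,c) = s(a,b) := huniq _ hacS (Sym2.mem_mk_left a c)
        have hcb : c = b := by
          rcases Sym2.eq_iff.mp heq with ⟨_, hcb⟩ | ⟨hab', _⟩
          · exact hcb
          · exact absurd hab' hab
        have hnd := hpw.edges_nodup
        rw [SimpleGraph.Walk.edges_cons] at hnd
        have hene : s(a,c) ∉ q.edges := (List.nodup_cons.mp hnd).1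
        rw [← heq, ← hcb]
        cases q with
        | nil => exact ⟨f₀, by rw [heq]; exact hf₀, hx⟩
        | cons h₂ q₂ =>
          rename_i c₂
          have hbc₂S : s(c,c₂) ∈ S := ((SimpleGraph.fromEdgeSet_adj S).mp h₂).1
          refine ⟨s(c,c₂), ⟨hbc₂S, fun heq2 => hene ?_⟩, Sym2.mem_mk_left _ _⟩
          rw [← heq2]
          rw [SimpleGraph.Walk.edges_cons]
          exact List.mem_cons_self
    exact Or.inr ⟨hbsupp, key, inv2_mono hcert, b, by simp, hbsupp⟩
  · -- Case 3 : impossible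
    exfalso
    push_neg at hc1 hc2
    -- a₀ is an anchor in the support; its edge is a bridge
    obtain ⟨e₁, he₁S, ha₀e₁⟩ := ha₀
    have he₁eq : e₁ = s(a₀, Sym2.Mem.other ha₀e₁) := (Sym2.other_spec ha₀e₁).symm
    set b₁ := Sym2.Mem.other ha₀e₁ with hb₁
    have hBP₁ : BP S s(a₀,b₁) a₀ b₁ :=
      ⟨rfl, he₁eq ▸ he₁S, hc1 a₀ b₁ ha₀A (he₁eq ▸ he₁S)⟩
    obtain ⟨g₁, s₁, t₁, hBP1, -, hleaf1⟩ :=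
      leaf (insideE S (Zset S s(a₀,b₁) b₁)).ncard Set.univ s(a₀,b₁) a₀ b₁ hBP₁ le_rfl
        (Set.subset_univ _)
    obtain ⟨hg₁eq, hg₁S, hg₁nr⟩ := hBP1
    subst hg₁eq
    -- find an anchored-or-v vertex in the leaf side Zset S s(s₁,t₁) t₁
    have hfind : ∀ (g : Sym2 V) (sx tx : V), g = s(sx,tx) → g ∈ S →
        ¬ (SimpleGraph.fromEdgeSet (S \ {g})).Reachable sx tx →
        ∃ z ∈ insert v A, z ∈ Zset S g tx := by
      intro g sx tx hgeq hgS hgnr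
      subst hgeq
      obtain ⟨w⟩ := hcert sx tx hgS
      have hsx : sx ∉ Zset S s(sx,tx) tx := fun h => hgnr h.symm
      have htx : tx ∈ Zset S s(sx,tx) tx := Reachable.refl _
      obtain ⟨p, q, hp, hq, hpq, -⟩ := cross w hsx htx
      rcases hpq with hpq | hpq
      · exfalso
        have hne : p ≠ q := fun h => hp (h ▸ hq)
        have hqp : s(q,p) ∈ S \ {s(sx,tx)} := by
          rwa [Sym2.eq_swap (a := q) (b := p)]
        have hadj : (SimpleGraph.fromEdgeSet (S \ {s(sx,tx)})).Adj q p := by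
          rw [SimpleGraph.fromEdgeSet_adj]
          exact ⟨hqp, hne.symm⟩
        exact hp (hq.trans hadj.reachable)
      · exact ⟨q, mem_KK_right hpq, hq⟩
    obtain ⟨z₁, hz₁B, hz₁Z⟩ := hfind s(s₁,t₁) s₁ t₁ rfl hg₁S hg₁nr
    rcases hz₁B with hz₁v | hz₁A
    · -- z₁ = v lies in the first leaf; find a second leaf on the other side
      have hBP₁' : BP S s(s₁,t₁) t₁ s₁ :=
        ⟨Sym2.eq_swap, hg₁S, fun h => hg₁nr h.symm⟩
      obtain ⟨g₂, s₂, t₂, hBP2, hZ2sub, hleaf2⟩ :=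
        leaf (insideE S (Zset S s(s₁,t₁) s₁)).ncard (Zset S s(s₁,t₁) s₁) s(s₁,t₁) t₁ s₁
          hBP₁' le_rfl (subset_refl _)
      obtain ⟨hg₂eq, hg₂S, hg₂nr⟩ := hBP2
      subst hg₂eq
      obtain ⟨z₂, hz₂B, hz₂Z⟩ := hfind s(s₂,t₂) s₂ t₂ rfl hg₂S hg₂nr
      have hdisj : z₂ ≠ v := by
        intro h
        subst h
        have h1 : (SimpleGraph.fromEdgeSet (S \ {s(s₁,t₁)})).Reachable t₁ z₂ := hz₁v ▸ hz₁Z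
        have h2 : (SimpleGraph.fromEdgeSet (S \ {s(s₁,t₁)})).Reachable s₁ z₂ := hZ2sub hz₂Z
        exact hg₁nr (h2.trans h1.symm)
      rcases hz₂B with hz₂v | hz₂A
      · exact hdisj hz₂v
      · exact finish hdiag hc1 hc2 hg₂S hleaf2 hz₂Z hz₂A
    · exact finish hdiag hc1 hc2 hg₁S hleaf1 hz₁Z hz₁A


def Chain (G : SimpleGraph V) : Set V → List G.Dart → Prop
  | _, [] => True
  | A, dd :: L =>
      dd.fst ∈ A ∧ (L = [] ∨ ∃ f ∈ L.map (SimpleGraph.Dart.edge), dd.snd ∈ f) ∧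
      EdgeSetConnected {e | e ∈ L.map (SimpleGraph.Dart.edge)} ∧
      Chain G (insert dd.fst (insert dd.snd A)) L

lemma main [Finite V] {G : SimpleGraph V} :
    ∀ (n : ℕ) (S : Set (Sym2 V)) (A : Set V) (v : V), S.ncard ≤ n → S ⊆ G.edgeSet →
    Inv S A v →
    ∃ L : List G.Dart, (L.map SimpleGraph.Dart.edge).Nodup ∧
      {e | e ∈ L.map SimpleGraph.Dart.edge} = S ∧ Chain G A L := by
  intro n
  induction n with
  | zero =>
    intro S A v hn hsub hInv
    exfalso
    obtain ⟨a, -, e, heS, -⟩ := hInv.2.2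
    have : S.Nonempty := ⟨e, heS⟩
    have := Set.ncard_pos (Set.toFinite _) |>.mpr this
    omega
  | succ n ih =>
    intro S A v hn hsub hInv
    have hdiag : ∀ e ∈ S, ¬ e.IsDiag := fun e he => (G.not_isDiag_of_mem_edgeSet (hsub he))
    obtain ⟨a, b, haA, habS, hrest⟩ := step hdiag hInv
    have hadj : G.Adj a b := (G.mem_edgeSet).mp (hsub habS)
    let d₀ : G.Dart := ⟨(a,b), hadj⟩
    have hd₀e : d₀.edge = s(a,b) := rfl
    rcases hrest with hS' | ⟨hb, hInv'⟩
    · have hSsing : S = {s(a,b)} :=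
        Set.eq_singleton_iff_unique_mem.mpr ⟨habS, fun x hx => by
          by_contra hne
          exact (Set.eq_empty_iff_forall_notMem.mp hS' x) ⟨hx, hne⟩⟩
      refine ⟨[d₀], by simp, ?_, ?_⟩
      · ext e
        simp [hd₀e, hSsing]
      · refine ⟨haA, Or.inl rfl, ?_, trivial⟩
        rintro u w ⟨e, he, -⟩
        simp at he
    · have hlt : (S \ {s(a,b)}).ncard < S.ncard :=
        Set.ncard_diff_singleton_lt_of_mem habS (Set.toFinite _)
      obtain ⟨L', hnd', hcov', hch'⟩ :=
        ih (S \ {s(a,b)}) (insert a (insert b A)) v (by omega)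
          (Set.diff_subset.trans hsub) hInv'
      refine ⟨d₀ :: L', ?_, ?_, ?_⟩
      · rw [List.map_cons, List.nodup_cons]
        refine ⟨fun hmem => ?_, hnd'⟩
        have : d₀.edge ∈ {e | e ∈ L'.map SimpleGraph.Dart.edge} := hmem
        rw [hcov'] at this
        exact this.2 hd₀e
      · ext e
        simp only [List.map_cons, List.mem_cons, Set.mem_setOf_eq]
        constructor
        · rintro (rfl | hmem)
          · exact hd₀e ▸ habS
          · have : e ∈ {e | e ∈ L'.map SimpleGraph.Dart.edge} := hmem
            rw [hcov'] at this
            exact this.1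
        · intro heS
          by_cases he : e = s(a,b)
          · exact Or.inl (he ▸ hd₀e.symm ▸ rfl)
          · exact Or.inr (by rw [show (e ∈ L'.map SimpleGraph.Dart.edge) = (e ∈ {e | e ∈ L'.map SimpleGraph.Dart.edge}) from rfl, hcov']; exact ⟨heS, he⟩)
      · refine ⟨haA, Or.inr ?_, ?_, hch'⟩
        · obtain ⟨f, hf, hbf⟩ := hb
          exact ⟨f, by rw [show (f ∈ L'.map SimpleGraph.Dart.edge) = (f ∈ {e | e ∈ L'.map SimpleGraph.Dart.edge}) from rfl, hcov']; exact hf, hbf⟩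
        · rw [show {e | e ∈ L'.map SimpleGraph.Dart.edge} = S \ {s(a,b)} from hcov']
          exact fun u w hu hw => hInv'.1 u w hu hw


lemma dart_fst_mem {G : SimpleGraph V} (d : G.Dart) : d.fst ∈ d.edge := by
  rcases d with ⟨⟨a,b⟩,h⟩
  exact Sym2.mem_mk_left a b

lemma dart_snd_mem {G : SimpleGraph V} (d : G.Dart) : d.snd ∈ d.edge := by
  rcases d with ⟨⟨a,b⟩,h⟩
  exact Sym2.mem_mk_right a b

lemma esc_single {a b : V} (hab : a ≠ b) : EdgeSetConnected {s(a,b)} := by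
  have hreach : ∀ x, x ∈ s(a,b) → (SimpleGraph.fromEdgeSet {s(a,b)}).Reachable x a := by
    intro x hx
    rcases Sym2.mem_iff.mp hx with rfl | rfl
    · rfl
    · refine SimpleGraph.Adj.reachable ?_
      rw [SimpleGraph.fromEdgeSet_adj]
      exact ⟨by rw [Sym2.eq_swap]; rfl, hab.symm⟩
  rintro p q ⟨e, he, hpe⟩ ⟨f, hf, hqf⟩
  rw [Set.mem_singleton_iff] at he hf
  exact (hreach p (he ▸ hpe)).trans (hreach q (hf ▸ hqf)).symm

lemma esc_glue {T : Set (Sym2 V)} {e : Sym2 V} {x : V}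
    (hT : EdgeSetConnected T) (hx : ∃ f ∈ T, x ∈ f) (hxe : x ∈ e) (hd : ¬ e.IsDiag) :
    EdgeSetConnected (insert e T) := by
  have hreach : ∀ u, (∃ f ∈ insert e T, u ∈ f) →
      (SimpleGraph.fromEdgeSet (insert e T)).Reachable u x := by
    rintro u ⟨f, hf, huf⟩
    rcases hf with rfl | hfT
    · by_cases hux : u = x
      · exact hux ▸ Reachable.refl u
      · refine SimpleGraph.Adj.reachable ?_
        rw [SimpleGraph.fromEdgeSet_adj]
        refine ⟨?_, hux⟩
        left
        induction f using Sym2.ind with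
        | _ p q =>
          rcases Sym2.mem_iff.mp huf with rfl | rfl <;>
            rcases Sym2.mem_iff.mp hxe with rfl | rfl
          · exact absurd rfl hux
          · rfl
          · rw [Sym2.eq_swap]
          · exact absurd rfl hux
    · exact (hT u x ⟨f, hfT, huf⟩ hx).mono
        (SimpleGraph.fromEdgeSet_mono (Set.subset_insert _ _))
  intro p q hp hq
  exact (hreach p hp).trans (hreach q hq).symm

lemma chain_first {G : SimpleGraph V} {A : Set V} {L : List G.Dart} (hch : Chain G A L)
    (h0 : 0 < L.length) : (L.get ⟨0, h0⟩).fst ∈ A := by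
  cases L with
  | nil => simp at h0
  | cons dd L => exact hch.1

lemma chain_tail {G : SimpleGraph V} :
    ∀ (L : List G.Dart) (A : Set V), Chain G A L →
    ∀ i (hi : i < L.length), (L.get ⟨i, hi⟩).fst ∈ A ∨
      ∃ j, ∃ hj : j < L.length, j < i ∧ (L.get ⟨i, hi⟩).fst ∈ (L.get ⟨j, hj⟩).edge := by
  intro L
  induction L with
  | nil => intro A _ i hi; exact absurd hi (Nat.not_lt_zero i)
  | cons dd L ih =>
    intro A hch i hi
    match i with
    | 0 => exact Or.inl hch.1
    | (i+1) =>
      have hi' : i < L.length := by simpa using hi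
      rcases ih _ hch.2.2.2 i hi' with hA | ⟨j, hj, hji, hmem⟩
      · rcases hA with h | h | h
        · refine Or.inr ⟨0, by simp, Nat.succ_pos _, ?_⟩
          show (L.get ⟨i, hi'⟩).fst ∈ dd.edge
          rw [h]; exact dart_fst_mem dd
        · refine Or.inr ⟨0, by simp, Nat.succ_pos _, ?_⟩
          show (L.get ⟨i, hi'⟩).fst ∈ dd.edge
          rw [h]; exact dart_snd_mem dd
        · exact Or.inl h
      · exact Or.inr ⟨j+1, by simpa using Nat.succ_lt_succ hj, Nat.succ_lt_succ hji, hmem⟩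

lemma chain_head {G : SimpleGraph V} :
    ∀ (L : List G.Dart) (A : Set V), Chain G A L →
    ∀ i (hi : i < L.length), i + 1 < L.length →
      ∃ j, ∃ hj : j < L.length, i < j ∧ (L.get ⟨i, hi⟩).snd ∈ (L.get ⟨j, hj⟩).edge := by
  intro L
  induction L with
  | nil => intro A _ i hi; exact absurd hi (Nat.not_lt_zero i)
  | cons dd L ih =>
    intro A hch i hi hi1
    match i with
    | 0 =>
      have hLne : L ≠ [] := by
        intro h
        rw [h] at hi1
        simp at hi1
      rcases hch.2.1 with h | ⟨f, hf, hsf⟩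
      · exact absurd h hLne
      · obtain ⟨dL, hdL, rfl⟩ := List.mem_map.mp hf
        obtain ⟨⟨k, hk⟩, hgetk⟩ := List.mem_iff_get.mp hdL
        refine ⟨k+1, by simpa using Nat.succ_lt_succ hk, Nat.succ_pos _, ?_⟩
        show dd.snd ∈ (L.get ⟨k, hk⟩).edge
        rw [hgetk]; exact hsf
    | (i+1) =>
      have hi' : i < L.length := by simpa using hi
      obtain ⟨j, hj, hij, hmem⟩ := ih _ hch.2.2.2 i hi' (by simpa using hi1)
      exact ⟨j+1, by simpa using Nat.succ_lt_succ hj, Nat.succ_lt_succ hij, hmem⟩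

lemma chain_suffix {G : SimpleGraph V} :
    ∀ (L : List G.Dart) (A : Set V), Chain G A L →
    ∀ i, EdgeSetConnected {e | e ∈ (L.drop (i+1)).map SimpleGraph.Dart.edge} := by
  intro L
  induction L with
  | nil =>
    rintro A _ i p q ⟨e, he, -⟩
    simp at he
  | cons dd L ih =>
    intro A hch i
    match i with
    | 0 =>
      have : (dd :: L).drop 1 = L := rfl
      rw [this]
      exact hch.2.2.1
    | (i+1) =>
      have : (dd :: L).drop (i+2) = L.drop (i+1) := rfl
      rw [this]
      exact ih _ hch.2.2.2 i


lemma dart_edge_eq {G : SimpleGraph V} (d : G.Dart) : d.edge = s(d.fst, d.snd) := by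
  rcases d with ⟨⟨a,b⟩,h⟩; rfl

end ContigAux

theorem stmt_6 {V : Type*} [Fintype V] (G : SimpleGraph V) (hconn : G.Connected)
    (hab : AlmostBridgeless G) :
    ∃ m : ℕ, HasContiguousOrientedLabeling G m := by
  classical
  obtain ⟨u, v, hbl⟩ := hab
  by_cases hE : G.edgeSet = ∅
  · refine ⟨0, fun i => i.elim0, ⟨fun i => i.elim0, ?_⟩, fun i => i.elim0, fun i => i.elim0⟩
    rintro ⟨e, he⟩
    rw [hE] at he
    exact absurd he (Set.notMem_empty _)
  · -- u is covered
    have husupp : u ∈ ContigAux.supp G.edgeSet := by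
      obtain ⟨e₀, he₀⟩ := Set.nonempty_iff_ne_empty.mpr hE
      obtain ⟨x, hx⟩ : ∃ x, x ∈ e₀ := by
        induction e₀ using Sym2.ind with
        | _ p q => exact ⟨p, Sym2.mem_mk_left _ _⟩
      by_cases hux : u = x
      · exact ⟨e₀, he₀, hux ▸ hx⟩
      · obtain ⟨w⟩ := hconn.preconnected u x
        obtain ⟨f, hf, huf⟩ := ContigAux.exists_edge_at_start w hux
        exact ⟨f, w.edges_subset_edgeSet hf, huf⟩
    have hInv : ContigAux.Inv G.edgeSet {u} v := by
      refine ⟨?_, ?_, u, rfl, husupp⟩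
      · intro x y _ _
        rw [SimpleGraph.fromEdgeSet_edgeSet]
        exact hconn.preconnected x y
      · intro p q hpq
        have hadjG : G.Adj p q := (G.mem_edgeSet).mp hpq
        have hadj' : (G ⊔ SimpleGraph.fromEdgeSet {s(u,v)}).Adj p q := by
          rw [SimpleGraph.sup_adj]; exact Or.inl hadjG
        have hnb := hbl s(p,q)
        rw [SimpleGraph.isBridge_iff] at hnb
        have hr : ((G ⊔ SimpleGraph.fromEdgeSet {s(u,v)}) \
            SimpleGraph.fromEdgeSet {s(p,q)}).Reachable p q := by
          by_contra h
          exact hnb h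
        refine hr.mono ?_
        have heq := SimpleGraph.fromEdgeSet_edgeSet
          ((G ⊔ SimpleGraph.fromEdgeSet {s(u,v)}) \ SimpleGraph.fromEdgeSet {s(p,q)})
        rw [← heq]
        apply SimpleGraph.fromEdgeSet_mono
        rw [SimpleGraph.edgeSet_sdiff, SimpleGraph.edgeSet_sup,
          SimpleGraph.edgeSet_fromEdgeSet, SimpleGraph.edgeSet_fromEdgeSet]
        rintro x ⟨hx1, hx2⟩
        have hxnd : ¬ x.IsDiag := by
          rcases hx1 with hx | hx
          · exact G.not_isDiag_of_mem_edgeSet hx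
          · exact hx.2
        have hxne : x ≠ s(p,q) := fun h => hx2 ⟨h ▸ rfl, hxnd⟩
        rcases hx1 with hx | hx
        · exact Or.inl ⟨hx, hxne⟩
        · refine Or.inr ?_
          rw [hx.1]
          exact ContigAux.mem_KK (Set.mem_insert_iff.mpr (Or.inr rfl)) (Or.inl rfl)
    obtain ⟨L, hnd, hcov, hch⟩ :=
      ContigAux.main G.edgeSet.ncard G.edgeSet {u} v le_rfl (subset_refl _) hInv
    -- helper : anchored tails become earlier-edge tails
    have hTail : ∀ k (hk : k < L.length), 0 < k →
        ∃ j, ∃ hj : j < L.length, j < k ∧ (L.get ⟨k,hk⟩).fst ∈ (L.get ⟨j,hj⟩).edge := by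
      intro k hk hk0
      rcases ContigAux.chain_tail L {u} hch k hk with hA | h
      · have h0 : 0 < L.length := lt_of_le_of_lt (Nat.zero_le k) hk
        have hu0 : (L.get ⟨0,h0⟩).fst = u :=
          Set.mem_singleton_iff.mp (ContigAux.chain_first hch h0)
        have huk : (L.get ⟨k,hk⟩).fst = u := Set.mem_singleton_iff.mp hA
        exact ⟨0, h0, hk0, by rw [huk, ← hu0]; exact ContigAux.dart_fst_mem _⟩
      · exact h
    refine ⟨L.length, fun i => L.get i, ⟨?_, ?_⟩, ?_, ?_⟩
    · -- injective
      intro i j hij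
      have he : (L.get i).edge = (L.get j).edge := congrArg Subtype.val hij
      have hlen : ∀ k : Fin L.length, (k : ℕ) < (L.map SimpleGraph.Dart.edge).length := by
        intro k; simpa using k.2
      have h1 : (L.map SimpleGraph.Dart.edge).get ⟨i, hlen i⟩ =
          (L.map SimpleGraph.Dart.edge).get ⟨j, hlen j⟩ := by
        simp only [List.get_eq_getElem, List.getElem_map]
        exact he
      have := (List.Nodup.get_inj_iff hnd).mp h1
      have hv : (i : ℕ) = (j : ℕ) := by
        have h2 := congrArg Fin.val this
        simpa using h2
      exact Fin.ext hv
    · -- surjective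
      rintro ⟨e, he⟩
      have hmem : e ∈ L.map SimpleGraph.Dart.edge := by
        have : e ∈ {e | e ∈ L.map SimpleGraph.Dart.edge} := by rw [hcov]; exact he
        exact this
      obtain ⟨⟨t, ht⟩, hgt⟩ := List.mem_iff_get.mp hmem
      refine ⟨⟨t, by simpa using ht⟩, ?_⟩
      apply Subtype.ext
      show (L.get _).edge = e
      rw [← hgt]; simp
    · -- prefix conditions
      intro i hi
      have claim : ∀ k : ℕ,
          EdgeSetConnected {e | ∃ j : Fin L.length, (j : ℕ) < k ∧ e = (L.get j).edge} := by
        intro k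
        induction k with
        | zero =>
          rintro p q ⟨e, he, -⟩ -
          obtain ⟨j, hj, -⟩ := he
          omega
        | succ k ihk =>
          by_cases hk : k < L.length
          · have hset : {e | ∃ j : Fin L.length, (j : ℕ) < k+1 ∧ e = (L.get j).edge} =
                insert ((L.get ⟨k,hk⟩).edge)
                  {e | ∃ j : Fin L.length, (j : ℕ) < k ∧ e = (L.get j).edge} := by
              ext e
              simp only [Set.mem_setOf_eq, Set.mem_insert_iff]
              constructor
              · rintro ⟨j, hjk, rfl⟩
                by_cases hjk' : (j : ℕ) = k
                · left
                  have : j = ⟨k, hk⟩ := Fin.ext hjk'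
                  rw [this]
                · exact Or.inr ⟨j, by omega, rfl⟩
              · rintro (rfl | ⟨j, hjk, rfl⟩)
                · exact ⟨⟨k,hk⟩, Nat.lt_succ_self k, rfl⟩
                · exact ⟨j, by omega, rfl⟩
            rw [hset]
            by_cases hk0 : k = 0
            · subst hk0
              have hempty : {e | ∃ j : Fin L.length, (j : ℕ) < 0 ∧ e = (L.get j).edge} =
                  (∅ : Set (Sym2 V)) := by
                ext e; simp
              have hsing : insert ((L.get ⟨0,hk⟩).edge) (∅ : Set (Sym2 V)) =
                  {(L.get ⟨0,hk⟩).edge} := by simp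
              rw [hempty, hsing, ContigAux.dart_edge_eq]
              exact ContigAux.esc_single (L.get ⟨0,hk⟩).adj.ne
            · obtain ⟨j, hj, hjk, hmem⟩ := hTail k hk (Nat.pos_of_ne_zero hk0)
              refine ContigAux.esc_glue ihk
                ⟨(L.get ⟨j,hj⟩).edge, ⟨⟨j,hj⟩, hjk, rfl⟩, hmem⟩
                (ContigAux.dart_fst_mem _) ?_
              exact G.not_isDiag_of_mem_edgeSet (SimpleGraph.Dart.edge_mem _)
          · have hset : {e | ∃ j : Fin L.length, (j : ℕ) < k+1 ∧ e = (L.get j).edge} =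
                {e | ∃ j : Fin L.length, (j : ℕ) < k ∧ e = (L.get j).edge} := by
              ext e
              simp only [Set.mem_setOf_eq]
              constructor
              · rintro ⟨j, hjk, rfl⟩
                exact ⟨j, by have := j.2; omega, rfl⟩
              · rintro ⟨j, hjk, rfl⟩
                exact ⟨j, by omega, rfl⟩
            rw [hset]
            exact ihk
      constructor
      · have := claim (i : ℕ)
        have hseteq : {e | ∃ j, j < i ∧ e = ((fun i => L.get i) j).edge} =
            {e | ∃ j : Fin L.length, (j : ℕ) < (i : ℕ) ∧ e = (L.get j).edge} := by
          ext e
          simp only [Set.mem_setOf_eq, Fin.lt_def]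
        rw [hseteq]
        exact this
      · obtain ⟨j, hj, hjk, hmem⟩ := hTail (i : ℕ) i.2 hi
        exact ⟨⟨j, hj⟩, by simpa [Fin.lt_def] using hjk, hmem⟩
    · -- suffix conditions
      intro i hi
      have hlen1 : (i : ℕ) + 1 < L.length := by
        have := i.2
        omega
      constructor
      · have hsc := ContigAux.chain_suffix L {u} hch (i : ℕ)
        have hset : {e | ∃ j, i < j ∧ e = ((fun i => L.get i) j).edge} =
            {e | e ∈ (L.drop ((i : ℕ)+1)).map SimpleGraph.Dart.edge} := by
          ext e
          simp only [Set.mem_setOf_eq, List.mem_map, Fin.lt_def]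
          constructor
          · rintro ⟨j, hij, rfl⟩
            refine ⟨L.get j, ?_, rfl⟩
            have h1 : (i : ℕ) + 1 + ((j : ℕ) - ((i : ℕ)+1)) < L.length := by
              have := j.2; omega
            have h2 : L.get ⟨(i : ℕ)+1+((j : ℕ)-((i : ℕ)+1)), h1⟩ = (L.drop ((i : ℕ)+1)).get ⟨(j : ℕ)-((i : ℕ)+1), List.lt_length_drop h1⟩ := List.getElem_drop' h1
            have h3 : (⟨(i : ℕ)+1+((j : ℕ)-((i : ℕ)+1)), h1⟩ : Fin L.length) = j :=
              Fin.ext (by show (i:ℕ)+1+((j:ℕ)-((i:ℕ)+1)) = (j:ℕ); omega)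
            rw [← h3, h2]
            exact List.get_mem _ _
          · rintro ⟨dd, hdd, rfl⟩
            obtain ⟨⟨t, ht⟩, hgt⟩ := List.mem_iff_get.mp hdd
            have h1 : (i : ℕ)+1+t < L.length := by
              have := ht
              simp only [List.length_drop] at this
              omega
            refine ⟨⟨(i : ℕ)+1+t, h1⟩, by show (i:ℕ) < (i:ℕ)+1+t; omega, ?_⟩
            have h2 : L.get ⟨(i : ℕ)+1+t, h1⟩ = (L.drop ((i : ℕ)+1)).get ⟨t, List.lt_length_drop h1⟩ := List.getElem_drop' h1
            rw [← hgt]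
            exact congrArg SimpleGraph.Dart.edge h2.symm
        rw [hset]
        exact hsc
      · obtain ⟨j, hj, hij, hmem⟩ := ContigAux.chain_head L {u} hch (i : ℕ) i.2 hlen1
        exact ⟨⟨j, hj⟩, by simpa [Fin.lt_def] using hij, hmem⟩
end

section
/- Consider a star graph with 2n-1 edges where each of n agents values each edge exactly 1/(2n-1), uniformly distributed within each edge. Then in any allocation of the star into n pairwise disjoint connected pieces, some agent receives value at most 1/(2n-1). -/
open MeasureTheory

/-- A piece of cake on a star with `k` edges: for each edge (parametrized by `[0,1]` with the
center of the star at `1` and the outer endpoint at `0`), the subset of that edge in the piece.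
Every part must be a subset of the edge `[0,1]`. -/
def IsPieceOnStar (k : ℕ) (P : Fin k → Set ℝ) : Prop :=
  ∀ j, P j ⊆ Set.Icc (0 : ℝ) 1

/-- A piece on the star is connected iff each part is an interval and, whenever the piece
touches two distinct edges, each nonempty part contains the center (the point `1`). -/
def IsConnectedPieceOnStar (k : ℕ) (P : Fin k → Set ℝ) : Prop :=
  (∀ j, (P j).OrdConnected) ∧
  ∀ j j' : Fin k, j ≠ j' → (P j).Nonempty → (P j').Nonempty → (1 : ℝ) ∈ P j

/-- The value of a piece when each edge is valued `w`, uniformly distributed on the edge. -/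
noncomputable def starPieceValue (k : ℕ) (P : Fin k → Set ℝ) (w : ℝ) : ℝ :=
  ∑ j, w * (volume (P j)).toReal

theorem stmt_12 (n : ℕ) (hn : 1 ≤ n) (P : Fin n → Fin (2 * n - 1) → Set ℝ)
    (hpiece : ∀ i, IsPieceOnStar (2 * n - 1) (P i))
    (hconn : ∀ i, IsConnectedPieceOnStar (2 * n - 1) (P i))
    (hdisj : ∀ i i', i ≠ i' → ∀ j, (P i j ∩ P i' j).Finite) :
    ∃ i, starPieceValue (2 * n - 1) (P i) (1 / (2 * (n : ℝ) - 1)) ≤ 1 / (2 * (n : ℝ) - 1) := by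
  classical
  by_contra hcon
  push_neg at hcon
  have hn1 : (1 : ℝ) ≤ n := by exact_mod_cast hn
  have hw : (0 : ℝ) < 1 / (2 * (n : ℝ) - 1) := by
    apply one_div_pos.mpr; linarith
  -- volumes are at most 1
  have hvol_le : ∀ i j, volume (P i j) ≤ 1 := by
    intro i j
    have := measure_mono (μ := (volume : Measure ℝ)) (hpiece i j)
    simpa [Real.volume_Icc] using this
  have hvol_ne_top : ∀ i j, volume (P i j) ≠ ⊤ := fun i j =>
    ne_top_of_le_ne_top ENNReal.one_ne_top (hvol_le i j)
  have hvolR_le : ∀ i j, (volume (P i j)).toReal ≤ 1 := by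
    intro i j
    have := ENNReal.toReal_mono ENNReal.one_ne_top (hvol_le i j)
    simpa using this
  -- each agent's total length exceeds 1
  have hS : ∀ i, 1 < ∑ j, (volume (P i j)).toReal := by
    intro i
    have h1 := hcon i
    rw [starPieceValue, ← Finset.mul_sum] at h1
    nlinarith [h1, hw]
  -- the set of edges where agent i has positive measure
  set E : Fin n → Finset (Fin (2 * n - 1)) :=
    fun i => Finset.univ.filter (fun j => 0 < (volume (P i j)).toReal) with hE
  have hcard : ∀ i, 2 ≤ (E i).card := by
    intro i
    by_contra hc
    push_neg at hc
    have hzero : ∀ j ∈ Finset.univ, j ∉ E i → (volume (P i j)).toReal = 0 := by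
      intro j _ hj
      simp only [hE, Finset.mem_filter, Finset.mem_univ, true_and, not_lt] at hj
      exact le_antisymm hj ENNReal.toReal_nonneg
    have heq : ∑ j ∈ E i, (volume (P i j)).toReal = ∑ j, (volume (P i j)).toReal :=
      Finset.sum_subset (Finset.subset_univ _) hzero
    have hle : ∑ j ∈ E i, (volume (P i j)).toReal ≤ (E i).card := by
      calc ∑ j ∈ E i, (volume (P i j)).toReal ≤ ∑ _j ∈ E i, (1 : ℝ) :=
            Finset.sum_le_sum fun j _ => hvolR_le i j
        _ = (E i).card := by simp
    have := hS i
    have hcle : ((E i).card : ℝ) ≤ 1 := by exact_mod_cast Nat.lt_succ_iff.mp hc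
    linarith [heq ▸ hle]
  -- on each edge in E i, agent i owns an interval adjacent to the center
  have hint : ∀ i j, j ∈ E i → ∃ x, x < 1 ∧ Set.Icc x 1 ⊆ P i j := by
    intro i j hj
    have hjpos : 0 < (volume (P i j)).toReal := by
      simpa [hE, Finset.mem_filter] using hj
    have hne0 : volume (P i j) ≠ 0 := by
      intro h; rw [h] at hjpos; simp at hjpos
    have hx : ∃ x ∈ P i j, x < 1 := by
      by_contra hx
      push_neg at hx
      have hsub : P i j ⊆ {1} := fun y hy =>
        le_antisymm ((hpiece i j) hy).2 (hx y hy)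
      have := measure_mono (μ := (volume : Measure ℝ)) hsub
      simp only [measure_singleton, le_zero_iff] at this
      exact hne0 this
    obtain ⟨x, hxP, hx1⟩ := hx
    obtain ⟨j', hj', hne⟩ := Finset.exists_mem_ne (lt_of_lt_of_le one_lt_two (hcard i)) j
    have hj'pos : 0 < (volume (P i j')).toReal := by
      simpa [hE, Finset.mem_filter] using hj'
    have hj'ne0 : volume (P i j') ≠ 0 := by
      intro h; rw [h] at hj'pos; simp at hj'pos
    have h1mem : (1 : ℝ) ∈ P i j :=
      (hconn i).2 j j' (Ne.symm hne) ⟨x, hxP⟩ (MeasureTheory.nonempty_of_measure_ne_zero hj'ne0)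
    exact ⟨x, hx1, ((hconn i).1 j).out hxP h1mem⟩
  -- the E i are pairwise disjoint
  have hdisjE : ∀ i i' : Fin n, i ≠ i' → Disjoint (E i) (E i') := by
    intro i i' hne
    rw [Finset.disjoint_left]
    intro j hj hj'
    obtain ⟨x, hx1, hxs⟩ := hint i j hj
    obtain ⟨y, hy1, hys⟩ := hint i' j hj'
    have hsub : Set.Icc (max x y) 1 ⊆ P i j ∩ P i' j := fun z hz =>
      ⟨hxs ⟨le_trans (le_max_left x y) hz.1, hz.2⟩,
       hys ⟨le_trans (le_max_right x y) hz.1, hz.2⟩⟩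
    have hinf : (Set.Icc (max x y) 1).Infinite := Set.Icc_infinite (max_lt hx1 hy1)
    exact hinf ((hdisj i i' hne j).subset hsub)
  -- counting
  have hsum_le : ∑ i, (E i).card ≤ 2 * n - 1 := by
    rw [← Finset.card_biUnion (fun i _ i' _ h => hdisjE i i' h)]
    simpa using Finset.card_le_univ (Finset.univ.biUnion E)
  have hsum_ge : 2 * n ≤ ∑ i, (E i).card := by
    calc 2 * n = ∑ _i : Fin n, 2 := by simp [mul_comm]
      _ ≤ ∑ i, (E i).card := Finset.sum_le_sum fun i _ => hcard i
  omega
end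

section
/- Consider a star graph with four edges where both of two agents value each edge exactly 1/4, uniformly. Then there is no pair of disjoint connected pieces (A_1, A_2) such that one agent's value for A_1 exceeds 1/2 and the other agent's value for A_2 exceeds 1/4. -/
open MeasureTheory

lemma vol_le_one {s : Set ℝ} (h : s ⊆ Set.Icc (0:ℝ) 1) : (volume s).toReal ≤ 1 := by
  have h1 : volume s ≤ volume (Set.Icc (0:ℝ) 1) := measure_mono h
  have h2 : volume (Set.Icc (0:ℝ) 1) = 1 := by simp [Real.volume_Icc]
  rw [h2] at h1
  calc (volume s).toReal ≤ (1 : ENNReal).toReal := ENNReal.toReal_mono (by simp) h1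
    _ = 1 := by simp

lemma card_filter_ge (v : Fin 4 → ℝ) (hle : ∀ j, v j ≤ 1) (c : ℝ)
    (hsum : c < ∑ j, v j) :
    c < ((Finset.univ.filter (fun j => 0 < v j)).card : ℝ) := by
  have key : ∑ j, v j ≤ ((Finset.univ.filter (fun j => 0 < v j)).card : ℝ) := by
    rw [← Finset.sum_boole]
    apply Finset.sum_le_sum
    intro j _
    by_cases h : 0 < v j
    · simp [h, hle j]
    · simp [h]; linarith [lt_or_ge 0 (v j) |>.resolve_left h]
  linarith

lemma nonempty_of_pos_vol {s : Set ℝ} (h : 0 < (volume s).toReal) : s.Nonempty := by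
  rcases Set.eq_empty_or_nonempty s with rfl | h'
  · simp at h
  · exact h'

lemma exists_lt_one_of_pos_vol {s : Set ℝ} (hsub : s ⊆ Set.Icc (0:ℝ) 1)
    (h : 0 < (volume s).toReal) : ∃ x ∈ s, x < 1 := by
  by_contra hc
  push_neg at hc
  have hsub1 : s ⊆ {1} := by
    intro x hx
    have := (hsub hx).2
    have := hc x hx
    simp; linarith
  have : volume s ≤ volume ({1} : Set ℝ) := measure_mono hsub1
  simp [Real.volume_singleton] at this
  rw [this] at h
  simp at h

theorem stmt_13 :
    ¬ ∃ A₁ A₂ : Fin 4 → Set ℝ,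
      IsPieceOnStar 4 A₁ ∧ IsPieceOnStar 4 A₂ ∧
      IsConnectedPieceOnStar 4 A₁ ∧ IsConnectedPieceOnStar 4 A₂ ∧
      (∀ j, (A₁ j ∩ A₂ j).Finite) ∧
      1 / 2 < starPieceValue 4 A₁ (1 / 4) ∧ 1 / 4 < starPieceValue 4 A₂ (1 / 4) := by
  rintro ⟨A₁, A₂, hP₁, hP₂, ⟨hO₁, hC₁⟩, ⟨hO₂, hC₂⟩, hfin, hval₁, hval₂⟩
  set v₁ : Fin 4 → ℝ := fun j => (volume (A₁ j)).toReal with hv₁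
  set v₂ : Fin 4 → ℝ := fun j => (volume (A₂ j)).toReal with hv₂
  have hsum₁ : (2:ℝ) < ∑ j, v₁ j := by
    have : starPieceValue 4 A₁ (1/4) = (1/4) * ∑ j, v₁ j := by
      simp [starPieceValue, Finset.mul_sum, hv₁]
    rw [this] at hval₁; linarith
  have hsum₂ : (1:ℝ) < ∑ j, v₂ j := by
    have : starPieceValue 4 A₂ (1/4) = (1/4) * ∑ j, v₂ j := by
      simp [starPieceValue, Finset.mul_sum, hv₂]
    rw [this] at hval₂; linarith
  set S₁ : Finset (Fin 4) := Finset.univ.filter (fun j => 0 < v₁ j) with hS₁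
  set S₂ : Finset (Fin 4) := Finset.univ.filter (fun j => 0 < v₂ j) with hS₂
  have hcard₁ : 3 ≤ S₁.card := by
    have := card_filter_ge v₁ (fun j => vol_le_one (hP₁ j)) 2 hsum₁
    exact_mod_cast this
  have hcard₂ : 2 ≤ S₂.card := by
    have := card_filter_ge v₂ (fun j => vol_le_one (hP₂ j)) 1 hsum₂
    exact_mod_cast this
  -- find common edge
  have hunion : (S₁ ∪ S₂).card ≤ 4 := by
    calc (S₁ ∪ S₂).card ≤ (Finset.univ : Finset (Fin 4)).card :=
      Finset.card_le_card (Finset.subset_univ _)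
    _ = 4 := by simp
  have hinter : 0 < (S₁ ∩ S₂).card := by
    have := Finset.card_union_add_card_inter S₁ S₂
    omega
  obtain ⟨j, hj⟩ := Finset.card_pos.mp hinter
  have hj₁ : 0 < v₁ j := by
    have := Finset.mem_inter.mp hj |>.1
    simpa [hS₁] using this
  have hj₂ : 0 < v₂ j := by
    have := Finset.mem_inter.mp hj |>.2
    simpa [hS₂] using this
  -- companion edges
  have herase₁ : 0 < (S₁.erase j).card := by
    have := Finset.card_erase_of_mem (Finset.mem_inter.mp hj).1
    omega
  obtain ⟨j', hj'⟩ := Finset.card_pos.mp herase₁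
  have herase₂ : 0 < (S₂.erase j).card := by
    have := Finset.card_erase_of_mem (Finset.mem_inter.mp hj).2
    omega
  obtain ⟨j'', hj''⟩ := Finset.card_pos.mp herase₂
  have hne' : j ≠ j' := (Finset.ne_of_mem_erase hj').symm
  have hne'' : j ≠ j'' := (Finset.ne_of_mem_erase hj'').symm
  have hvj' : 0 < v₁ j' := by
    have := Finset.mem_of_mem_erase hj'
    simpa [hS₁] using this
  have hvj'' : 0 < v₂ j'' := by
    have := Finset.mem_of_mem_erase hj''
    simpa [hS₂] using this
  -- 1 is in both parts on edge j
  have h1A₁ : (1:ℝ) ∈ A₁ j :=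
    hC₁ j j' hne' (nonempty_of_pos_vol hj₁) (nonempty_of_pos_vol hvj')
  have h1A₂ : (1:ℝ) ∈ A₂ j :=
    hC₂ j j'' hne'' (nonempty_of_pos_vol hj₂) (nonempty_of_pos_vol hvj'')
  obtain ⟨x₁, hx₁, hx₁lt⟩ := exists_lt_one_of_pos_vol (hP₁ j) hj₁
  obtain ⟨x₂, hx₂, hx₂lt⟩ := exists_lt_one_of_pos_vol (hP₂ j) hj₂
  have hIcc₁ : Set.Icc x₁ 1 ⊆ A₁ j := (hO₁ j).out hx₁ h1A₁
  have hIcc₂ : Set.Icc x₂ 1 ⊆ A₂ j := (hO₂ j).out hx₂ h1A₂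
  have hsubI : Set.Icc (max x₁ x₂) 1 ⊆ A₁ j ∩ A₂ j := by
    intro x hx
    exact ⟨hIcc₁ ⟨le_trans (le_max_left _ _) hx.1, hx.2⟩,
           hIcc₂ ⟨le_trans (le_max_right _ _) hx.1, hx.2⟩⟩
  have hinf : (Set.Icc (max x₁ x₂) 1).Infinite :=
    Set.Icc_infinite (max_lt hx₁lt hx₂lt)
  exact hinf ((hfin j).subset hsubI)
end

section
/- Let α ∈ (1/2, 1]. On the interval cake [0,1], suppose agent 1 values [0,1] uniformly and agent 2's value is uniformly concentrated on [1-α, α]. Then any pair of disjoint subintervals (A_1, A_2) with agent 1's value for A_1 at least α forces agent 2's value for A_2 to be 0. -/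
open MeasureTheory

theorem stmt_14 (α : ℝ) (hα1 : 1 / 2 < α) (hα2 : α ≤ 1) (A₁ A₂ : Set ℝ)
    (hA₁ : A₁ ⊆ Set.Icc (0 : ℝ) 1) (hA₂ : A₂ ⊆ Set.Icc (0 : ℝ) 1)
    (hA₁c : A₁.OrdConnected) (hA₂c : A₂.OrdConnected)
    (hdisj : (A₁ ∩ A₂).Subsingleton)
    (hval₁ : α ≤ (volume A₁).toReal) :
    (volume (A₂ ∩ Set.Icc (1 - α) α)).toReal / (2 * α - 1) = 0 := by
  have hA₁ne : A₁.Nonempty := by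
    by_contra h
    rw [Set.not_nonempty_iff_eq_empty] at h
    subst h
    simp at hval₁
    linarith
  have hbddB : BddBelow A₁ := ⟨0, fun x hx => (hA₁ hx).1⟩
  have hbddA : BddAbove A₁ := ⟨1, fun x hx => (hA₁ hx).2⟩
  set a := sInf A₁ with ha
  set b := sSup A₁ with hb
  have ha0 : 0 ≤ a := le_csInf hA₁ne fun x hx => (hA₁ hx).1
  have hb1 : b ≤ 1 := csSup_le hA₁ne fun x hx => (hA₁ hx).2
  have hab : a ≤ b := Real.sInf_le_sSup _ hbddB hbddA
  have hsub : A₁ ⊆ Set.Icc a b := fun x hx => ⟨csInf_le hbddB hx, le_csSup hbddA hx⟩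
  have hvol : volume A₁ ≤ ENNReal.ofReal (b - a) := by
    calc volume A₁ ≤ volume (Set.Icc a b) := measure_mono hsub
    _ = ENNReal.ofReal (b - a) := Real.volume_Icc
  have hba : α ≤ b - a := by
    have h1 := ENNReal.toReal_mono ENNReal.ofReal_ne_top hvol
    rw [ENNReal.toReal_ofReal (by linarith)] at h1
    linarith
  have hIoo : Set.Ioo a b ⊆ A₁ := fun x hx => by
    obtain ⟨y, hy, hyx⟩ := (csInf_lt_iff hbddB hA₁ne).1 hx.1
    obtain ⟨z, hz, hxz⟩ := (lt_csSup_iff hbddA hA₁ne).1 hx.2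
    exact hA₁c.out hy hz ⟨le_of_lt hyx, le_of_lt hxz⟩
  have hIoo2 : Set.Ioo (1 - α) α ⊆ A₁ := fun x hx =>
    hIoo ⟨lt_of_le_of_lt (by linarith) hx.1, lt_of_lt_of_le hx.2 (by linarith)⟩
  have hnull : volume (A₂ ∩ Set.Ioo (1 - α) α) = 0 := by
    refine measure_mono_null (fun x hx => ?_) (hdisj.measure_zero volume)
    exact ⟨hIoo2 hx.2, hx.1⟩
  have hnull2 : volume (A₂ ∩ Set.Icc (1 - α) α) = 0 := by
    have hsub2 : A₂ ∩ Set.Icc (1 - α) α ⊆ (A₂ ∩ Set.Ioo (1 - α) α) ∪ {1 - α, α} := by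
      rintro x ⟨hx2, hx1, hx3⟩
      rcases eq_or_lt_of_le hx1 with h | h
      · exact Or.inr (Or.inl h.symm)
      rcases eq_or_lt_of_le hx3 with h' | h'
      · exact Or.inr (Or.inr h')
      exact Or.inl ⟨hx2, h, h'⟩
    refine measure_mono_null hsub2 ?_
    rw [measure_union_null_iff]
    refine ⟨hnull, ?_⟩
    have : ({1 - α, α} : Set ℝ).Countable := (Set.countable_singleton _).insert _
    exact this.measure_zero _
  rw [hnull2]
  simp
end

section
/- Let r and k be integers with 0 ≤ r ≤ k, let S be a sum of r terms of the form ε·3^a with ε ∈ {±1,±2} and a an integer, and let Δ be a rational with |Δ| ≤ (k-r)/3^k. Then |(S + Δ) - 1/2| ≥ 1/(2·3^k). -/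
lemma cast_sum (c : ℕ) : ∀ l : List (ℤ × ℤ), (∀ p ∈ l, -(c:ℤ) ≤ p.2) →
    (((l.map fun p => 2 * p.1 * 3^(p.2 + (c:ℤ)).toNat).sum : ℤ) : ℚ)
      = (l.map fun p => (p.1:ℚ) * 3^p.2).sum * (2 * 3^c) := by
  intro l
  induction l with
  | nil => simp
  | cons p t iht =>
    intro h
    simp only [List.map_cons, List.sum_cons, add_mul]
    rw [Int.cast_add, iht (fun q hq => h q (List.mem_cons_of_mem _ hq))]
    congr 1
    push_cast
    have hnn : (0:ℤ) ≤ p.2 + c := by have := h p List.mem_cons_self; omega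
    have h3 : (3:ℚ) ^ (p.2 + (c:ℤ)).toNat = (3:ℚ) ^ ((p.2 : ℤ) + c) := by
      rw [← zpow_natCast, Int.toNat_of_nonneg hnn]
    rw [h3, zpow_add₀ (by norm_num : (3:ℚ) ≠ 0), zpow_natCast]
    push_cast
    ring

lemma odd_denom (l : List (ℤ × ℤ)) (c : ℕ) (h : ∀ p ∈ l, -(c:ℤ) ≤ p.2) :
    1/(2 * 3^c) ≤ |(l.map fun p => (p.1:ℚ) * 3^p.2).sum - 1/2| := by
  set S : ℚ := (l.map fun p => (p.1:ℚ) * 3^p.2).sum with hS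
  set N : ℤ := (l.map fun p => 2 * p.1 * 3^(p.2 + (c:ℤ)).toNat).sum - 3^c with hN
  have hcast : (N : ℚ) = (S - 1/2) * (2 * 3^c) := by
    rw [hN, hS]
    push_cast [cast_sum c l h]
    ring
  have heven : Even ((l.map fun p => 2 * p.1 * 3^(p.2 + (c:ℤ)).toNat).sum) := by
    obtain ⟨k, hk⟩ := List.dvd_sum (l := l.map fun p => 2 * p.1 * 3^(p.2 + (c:ℤ)).toNat)
      (a := 2) (fun x hx => by
        obtain ⟨p, _, rfl⟩ := List.mem_map.1 hx
        exact ⟨p.1 * 3^(p.2 + (c:ℤ)).toNat, by ring⟩)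
    exact ⟨k, by omega⟩
  have hodd : Odd N := heven.sub_odd ((by decide : Odd (3:ℤ)).pow)
  have hne : N ≠ 0 := by
    intro h0
    rw [h0] at hodd
    exact (Int.not_odd_iff_even.2 Even.zero) hodd
  have h1 : (1:ℚ) ≤ |(N:ℚ)| := by
    rw [← Int.cast_abs]; exact_mod_cast Int.one_le_abs hne
  rw [hcast, abs_mul] at h1
  have hpos : (0:ℚ) < 2 * 3^c := by positivity
  rw [abs_of_pos hpos] at h1
  rw [div_le_iff₀ hpos]
  linarith

lemma key : ∀ n : ℕ, ∀ l : List (ℤ × ℤ), l.length = n →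
    (∀ p ∈ l, p.1 = -2 ∨ p.1 = -1 ∨ p.1 = 1 ∨ p.1 = 2) →
    1/(2 * 3^n) ≤ |(l.map fun p => (p.1:ℚ) * 3^p.2).sum - 1/2| := by
  intro n
  induction n with
  | zero =>
    intro l hl _
    rw [List.length_eq_zero_iff.1 hl]
    simp only [List.map_nil, List.sum_nil, zero_sub, abs_neg, pow_zero]
    rw [abs_of_pos (by norm_num : (0:ℚ) < 1/2)]
    norm_num
  | succ n ih =>
    intro l hl hε
    by_cases hall : ∀ p ∈ l, -((n+1 : ℕ) : ℤ) ≤ p.2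
    · simpa [hl] using odd_denom l (n+1) hall
    · push_neg at hall
      obtain ⟨p, hp, hlt⟩ := hall
      obtain ⟨u, v, rfl⟩ := List.append_of_mem hp
      set t : List (ℤ × ℤ) := u ++ v with ht
      set A : ℚ := (p.1:ℚ) * 3^p.2 with hA
      set B : ℚ := (t.map fun q => (q.1:ℚ) * 3^q.2).sum with hB
      have hsum : ((u ++ p :: v).map fun q => (q.1:ℚ) * 3^q.2).sum = A + B := by
        simp [hB, ht, hA]
        ring
      have hlen : t.length = n := by
        simp only [ht, List.length_append] at hl ⊢
        simp at hl
        omega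
      have hmem : ∀ q ∈ t, q ∈ u ++ p :: v := by
        intro q hq
        simp only [ht, List.mem_append] at hq
        simp [List.mem_append]
        tauto
      have hih := ih t hlen (fun q hq => hε q (hmem q hq))
      rw [← hB] at hih
      have hpe : p.2 ≤ -((n:ℤ) + 2) := by
        have : (((n+1:ℕ)):ℤ) = (n:ℤ) + 1 := by push_cast; ring
        omega
      have habs : |A| ≤ 2 * (3:ℚ)^(-((n:ℤ)+2)) := by
        rw [hA, abs_mul]
        have h1 : |(p.1:ℚ)| ≤ 2 := by
          rcases hε p hp with h | h | h | h <;> simp [h]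
        have h2 : |(3:ℚ)^p.2| ≤ (3:ℚ)^(-((n:ℤ)+2)) := by
          rw [abs_of_pos (zpow_pos (by norm_num) _)]
          exact zpow_le_zpow_right₀ (by norm_num) hpe
        calc |(p.1:ℚ)| * |(3:ℚ)^p.2| ≤ 2 * |(3:ℚ)^p.2| :=
              mul_le_mul_of_nonneg_right h1 (abs_nonneg _)
          _ ≤ 2 * (3:ℚ)^(-((n:ℤ)+2)) := by linarith
      have htri : |B - 1/2| - |A| ≤ |A + B - 1/2| := by
        have h := abs_add_le (A + B - 1/2) (-A)
        rw [show A + B - 1/2 + -A = B - 1/2 by ring, abs_neg] at h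
        linarith
      have hz : (3:ℚ)^(-((n:ℤ)+2)) = 1 / 3^(n+2) := by
        rw [zpow_neg, ← zpow_natCast (3:ℚ) (n+2)]
        push_cast
        rw [one_div]
      have hfin : 1/(2 * (3:ℚ)^(n+1)) ≤ 1/(2 * 3^n) - 2 * (3:ℚ)^(-((n:ℤ)+2)) := by
        rw [hz]
        have h3 : (0:ℚ) < 3^n := by positivity
        have e1 : (3:ℚ)^(n+1) = 3 * 3^n := by ring
        have e2 : (3:ℚ)^(n+2) = 9 * 3^n := by ring
        rw [e1, e2]
        have e3 : 1/(2*3^n:ℚ) - 2*(1/(9*3^n)) = 5/(18*3^n) := by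
          field_simp
          ring
        rw [e3, div_le_div_iff₀ (by positivity) (by positivity)]
        nlinarith [h3]
      rw [hsum]
      linarith

lemma three_pow_ge (b : ℕ) : (2*b + 1 : ℕ) ≤ 3^b := by
  induction b with
  | zero => norm_num
  | succ b ih =>
    have : 3^(b+1) = 3 * 3^b := by ring
    omega

theorem stmt_16 (r k : ℕ) (hrk : r ≤ k) (a : Fin r → ℤ) (ε : Fin r → ℤ)
    (hε : ∀ i, ε i = -2 ∨ ε i = -1 ∨ ε i = 1 ∨ ε i = 2) (Δ : ℚ)
    (hΔ : |Δ| ≤ ((k : ℚ) - (r : ℚ)) / 3 ^ k) :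
    |(∑ i, (ε i : ℚ) * (3 : ℚ) ^ (a i)) + Δ - 1/2| ≥ 1 / (2 * 3 ^ k) := by
  set l : List (ℤ × ℤ) := (List.finRange r).map (fun i => (ε i, a i)) with hldef
  have hbridge : (∑ i, (ε i : ℚ) * (3 : ℚ) ^ (a i))
      = (l.map fun p => (p.1:ℚ) * 3^p.2).sum := by
    rw [Fin.sum_univ_def, hldef, List.map_map]
    rfl
  have hlen : l.length = r := by simp [hldef]
  have hεl : ∀ p ∈ l, p.1 = -2 ∨ p.1 = -1 ∨ p.1 = 1 ∨ p.1 = 2 := by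
    intro p hp
    rw [hldef] at hp
    obtain ⟨i, _, rfl⟩ := List.mem_map.1 hp
    exact hε i
  have hS := key r l hlen hεl
  rw [← hbridge] at hS
  set S := ∑ i, (ε i : ℚ) * (3 : ℚ) ^ (a i) with hSdef
  have htri : |S - 1/2| - |Δ| ≤ |S + Δ - 1/2| := by
    have h := abs_add_le (S + Δ - 1/2) (-Δ)
    rw [show S + Δ - 1/2 + -Δ = S - 1/2 by ring, abs_neg] at h
    linarith
  -- 1/(2*3^r) - (k-r)/3^k ≥ 1/(2*3^k)
  have hfin : 1/(2 * (3:ℚ)^k) ≤ 1/(2 * 3^r) - ((k:ℚ) - r)/3^k := by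
    have hsplit : (3:ℚ)^k = 3^r * 3^(k - r) := by
      rw [← pow_add]
      congr 1
      omega
    have hb := three_pow_ge (k - r)
    have hbq : 2 * ((k:ℚ) - r) + 1 ≤ 3^(k-r) := by
      have : ((2*(k-r) + 1 : ℕ) : ℚ) ≤ ((3^(k-r) : ℕ) : ℚ) := by exact_mod_cast hb
      push_cast at this
      have hkr : ((k - r : ℕ) : ℚ) = (k:ℚ) - r := by
        have : (r:ℚ) ≤ (k:ℚ) := by exact_mod_cast hrk
        push_cast [Nat.cast_sub hrk]
        ring
      rw [hkr] at this
      linarith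
    have h3r : (0:ℚ) < 3^r := by positivity
    have h3kr : (0:ℚ) < 3^(k-r) := by positivity
    rw [hsplit]
    rw [div_sub_div _ _ (by positivity) (by positivity),
      div_le_div_iff₀ (by positivity) (by positivity)]
    have hknr : (0:ℚ) ≤ (k:ℚ) - r := by
      have : (r:ℚ) ≤ (k:ℚ) := by exact_mod_cast hrk
      linarith
    have hnn : (0:ℚ) ≤ (3^r*3^r*3^(k-r)) * (3^(k-r) - (2*((k:ℚ)-r)+1)) :=
      mul_nonneg (by positivity) (by linarith)
    nlinarith [hnn, h3r, h3kr]
  have hΔ' : |Δ| ≤ ((k : ℚ) - (r : ℚ)) / 3 ^ k := hΔ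
  rw [ge_iff_le]
  linarith
end
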